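/- arXiv:2306.07139 — 2 statements merged into one kernel-verified Lean document; each statement's English description precedes it below -/
import Mathlib

section
/- Let G have admissible state x with x_j = 0 for all sinks j. If an injected token at node i reaches a sink t along a threshold-permitted path p, then t is a closest sink to i: there is no sink t' and path p' from i to t' with L(p') < L(p). Moreover x_i = L(p). -/
def arcCost {V : Type*} (γ : V → V → ℤ) (p : List V) : ℤ :=
  ((p.zip p.tail).map fun q => γ q.1 q.2).sum

def IsWalk {V : Type*} (A : V → V → Prop) (i j : V) (p : List V) : Prop :=
  p.Chain' A ∧ p.head? = some i ∧ p.getLast? = some j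

def IsPath {V : Type*} (A : V → V → Prop) (i j : V) (p : List V) : Prop :=
  IsWalk A i j p ∧ p.Nodup

/-- A directed circuit: a walk of at least one arc whose first and last nodes coincide. -/
def IsCircuit {V : Type*} (A : V → V → Prop) (p : List V) : Prop :=
  p.Chain' A ∧ 2 ≤ p.length ∧ p.head? = p.getLast?

lemma telescope {V : Type*} (x : V → ℤ) :
    ∀ (p : List V) (i j : V), p.head? = some i → p.getLast? = some j →
      ((p.zip p.tail).map fun q => x q.1 - x q.2).sum = x i - x j := by
  intro p
  induction p with
  | nil => intro i j h; simp at h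
  | cons a l ih =>
    intro i j hh hl
    simp only [List.head?_cons, Option.some.injEq] at hh
    subst hh
    cases l with
    | nil => simp_all
    | cons b l' =>
      have := ih b j rfl (by simpa using hl)
      simp only [List.zip_cons_cons, List.tail_cons, List.map_cons, List.sum_cons] at *
      omega

lemma mem_zip_of_chain' {V : Type*} (A : V → V → Prop) :
    ∀ (p : List V), p.Chain' A → ∀ q ∈ p.zip p.tail, A q.1 q.2 := by
  intro p
  induction p with
  | nil => simp
  | cons a l ih =>
    intro hc q hq
    cases l with
    | nil => simp at hq
    | cons b l' =>
      have hc : List.IsChain A (a :: b :: l') := hc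
      rw [List.isChain_cons_cons] at hc
      simp only [List.zip_cons_cons, List.tail_cons, List.mem_cons] at hq
      rcases hq with rfl | hq
      · exact hc.1
      · exact ih hc.2 q hq

/-- if an injected token at `i` reaches a sink `t` along a
threshold-permitted path `p`, then `t` is a closest sink to `i` (no path to any sink is
strictly shorter than `p`), and moreover `x i = L(p)`. -/
theorem reached_sink_is_closest {V : Type*} (A : V → V → Prop) (γ : V → V → ℤ)
    (x : V → ℤ) (T : Set V) (i t : V) (p : List V)
    (hcirc : ∀ c, IsCircuit A c → 0 < arcCost γ c)
    (hadm : ∀ a b, A a b → x a - x b ≤ γ a b)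
    (hsinks : ∀ s ∈ T, x s = 0)
    (ht : t ∈ T)
    (hpath : IsPath A i t p)
    (hperm : ∀ q ∈ p.zip p.tail, γ q.1 q.2 ≤ x q.1 - x q.2) :
    x i = arcCost γ p ∧
      ∀ t' ∈ T, ∀ p', IsPath A i t' p' → ¬ arcCost γ p' < arcCost γ p := by
  obtain ⟨⟨hchain, hh, hl⟩, -⟩ := hpath
  have htel : ((p.zip p.tail).map fun q => x q.1 - x q.2).sum = x i - x t :=
    telescope x p i t hh hl
  have hle : arcCost γ p ≤ ((p.zip p.tail).map fun q => x q.1 - x q.2).sum :=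
    List.sum_le_sum hperm
  have hge : ((p.zip p.tail).map fun q => x q.1 - x q.2).sum ≤ arcCost γ p :=
    List.sum_le_sum fun q hq => hadm q.1 q.2 (mem_zip_of_chain' A p hchain q hq)
  have hxt : x t = 0 := hsinks t ht
  have hxi : x i = arcCost γ p := by omega
  refine ⟨hxi, ?_⟩
  rintro t' ht' p' ⟨⟨hc', hh', hl'⟩, -⟩ hlt
  have htel' : ((p'.zip p'.tail).map fun q => x q.1 - x q.2).sum = x i - x t' :=
    telescope x p' i t' hh' hl'
  have hge' : ((p'.zip p'.tail).map fun q => x q.1 - x q.2).sum ≤ arcCost γ p' :=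
    List.sum_le_sum fun q hq => hadm q.1 q.2 (mem_zip_of_chain' A p' hc' q hq)
  have hxt' : x t' = 0 := hsinks t' ht'
  omega
end

section
/- Let G be a directed network with primary costs γ (no circuit with non-positive total γ), secondary costs σ ≥ 0 (no circuit with negative total σ), and budget C_max. Then the minimum primary length over all feasible paths from source s to the sink set in G equals the minimum primary length over all paths from s^0 to sink copies in the expanded network G_E. -/
/-- Arcs of the expanded network `G_E`: node `(i,c)` (node `i` at secondary-cost level
`c`, `0 ≤ c`) is joined to `(j, c + σ i j)` whenever `(i,j)` is an arc of `G` and the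
budget `Cmax` is not exceeded. -/
def ArcE {V : Type*} (A : V → V → Prop) (σ : V → V → ℤ) (Cmax : ℤ) :
    V × ℤ → V × ℤ → Prop :=
  fun a b => A a.1 b.1 ∧ 0 ≤ a.2 ∧ b.2 = a.2 + σ a.1 b.1 ∧ b.2 ≤ Cmax

/-- Primary costs on the expanded network: an expanded arc inherits the cost of the
underlying arc. -/
def γE {V : Type*} (γ : V → V → ℤ) : V × ℤ → V × ℤ → ℤ :=
  fun a b => γ a.1 b.1

/-- A feasible path in the constrained network: a path whose every prefix has secondary
cost within the budget `Cmax` (hence so does the whole path). -/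
def FeasiblePath {V : Type*} (A : V → V → Prop) (σ : V → V → ℤ) (Cmax : ℤ)
    (s t : V) (p : List V) : Prop :=
  IsPath A s t p ∧ ∀ q, q <+: p → arcCost σ q ≤ Cmax

section chaincompat
set_option linter.deprecated false

theorem List.chain'_cons {α : Type*} {R : α → α → Prop} {x y : α} {l : List α} :
    List.Chain' R (x :: y :: l) ↔ R x y ∧ List.Chain' R (y :: l) := List.isChain_cons_cons

theorem List.chain'_cons' {α : Type*} {R : α → α → Prop} {x : α} {l : List α} :
    List.Chain' R (x :: l) ↔ (∀ y ∈ l.head?, R x y) ∧ List.Chain' R l := List.isChain_cons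

theorem List.chain'_append {α : Type*} {R : α → α → Prop} {l₁ l₂ : List α} :
    List.Chain' R (l₁ ++ l₂) ↔ List.Chain' R l₁ ∧ List.Chain' R l₂ ∧
      ∀ x ∈ l₁.getLast?, ∀ y ∈ l₂.head?, R x y := List.isChain_append

theorem List.chain'_map {α β : Type*} {R : α → α → Prop} (f : β → α) {l : List β} :
    List.Chain' R (l.map f) ↔ List.Chain' (fun a b : β => R (f a) (f b)) l :=
  List.isChain_map f

@[simp] theorem List.chain'_nil {α : Type*} {R : α → α → Prop} : List.Chain' R [] :=
  List.IsChain.nil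

@[simp] theorem List.chain'_singleton {α : Type*} {R : α → α → Prop} (a : α) :
    List.Chain' R [a] := List.IsChain.singleton a

theorem List.Chain'.imp {α : Type*} {R S : α → α → Prop} (H : ∀ a b, R a b → S a b)
    {l : List α} (p : List.Chain' R l) : List.Chain' S l := List.IsChain.imp H p

end chaincompat

section aux
variable {V : Type*}

@[simp] lemma arcCost_nil (γ : V → V → ℤ) : arcCost γ [] = 0 := rfl

@[simp] lemma arcCost_single (γ : V → V → ℤ) (a : V) : arcCost γ [a] = 0 := rfl

@[simp] lemma arcCost_cons_cons (γ : V → V → ℤ) (a b : V) (l : List V) :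
    arcCost γ (a :: b :: l) = γ a b + arcCost γ (b :: l) := by
  simp [arcCost]

lemma arcCost_append_cons (γ : V → V → ℤ) (xs : List V) (a : V) (ys : List V) :
    arcCost γ (xs ++ a :: ys) = arcCost γ (xs ++ [a]) + arcCost γ (a :: ys) := by
  induction xs with
  | nil => simp
  | cons x xs ih =>
    cases xs with
    | nil => simp
    | cons b xs' =>
      simp only [List.cons_append, arcCost_cons_cons] at *
      rw [ih]; ring

lemma arcCost_nonneg {A : V → V → Prop} {σ : V → V → ℤ}
    (hσ : ∀ a b, A a b → 0 ≤ σ a b) :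
    ∀ {p : List V}, p.Chain' A → 0 ≤ arcCost σ p := by
  intro p
  induction p with
  | nil => intro; simp
  | cons x xs ih =>
    cases xs with
    | nil => intro; simp
    | cons y ys =>
      intro h
      rw [List.chain'_cons] at h
      have := ih h.2
      have := hσ _ _ h.1
      simp only [arcCost_cons_cons]; omega

lemma arcCost_prefix_le {A : V → V → Prop} {σ : V → V → ℤ}
    (hσ : ∀ a b, A a b → 0 ≤ σ a b) :
    ∀ (p q : List V), p.Chain' A → q <+: p → arcCost σ q ≤ arcCost σ p := by
  intro p
  induction p with
  | nil => intro q _ hq; simp [List.prefix_nil.mp hq]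
  | cons x xs ih =>
    intro q hc hq
    cases q with
    | nil => simpa using arcCost_nonneg hσ hc
    | cons a q' =>
      rw [List.cons_prefix_cons] at hq
      obtain ⟨rfl, hq'⟩ := hq
      cases q' with
      | nil => simpa using arcCost_nonneg hσ hc
      | cons b q'' =>
        cases xs with
        | nil => exact absurd hq' (by simp)
        | cons y ys =>
          obtain ⟨rfl, _⟩ := List.cons_prefix_cons.mp hq'
          rw [List.chain'_cons] at hc
          have := ih (b :: q'') hc.2 hq'
          simp only [arcCost_cons_cons]; omega

end aux


section bridge
variable {V : Type*}
lemma arcCost_cons_cons' (γ : V → V → ℤ) (a b : V) (l : List V) :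
    arcCost γ (a :: b :: l) = γ a b + arcCost γ (b :: l) := arcCost_cons_cons γ a b l
lemma arcCost_append_cons' (γ : V → V → ℤ) (xs : List V) (a : V) (ys : List V) :
    arcCost γ (xs ++ a :: ys) = arcCost γ (xs ++ [a]) + arcCost γ (a :: ys) :=
  arcCost_append_cons γ xs a ys
end bridge

section lift
variable {V : Type*}

def liftE (σ : V → V → ℤ) : List V → ℤ → List (V × ℤ)
  | [], _ => []
  | [a], c => [(a, c)]
  | a :: b :: l, c => (a, c) :: liftE σ (b :: l) (c + σ a b)

@[simp] lemma liftE_map_fst (σ : V → V → ℤ) :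
    ∀ (p : List V) (c : ℤ), (liftE σ p c).map Prod.fst = p
  | [], _ => rfl
  | [_], _ => rfl
  | a :: b :: l, c => by
    simp only [liftE, List.map_cons, List.cons.injEq, true_and]
    exact liftE_map_fst σ (b :: l) _

@[simp] lemma liftE_head? (σ : V → V → ℤ) :
    ∀ (p : List V) (c : ℤ), (liftE σ p c).head? = p.head?.map (fun a => (a, c))
  | [], _ => rfl
  | [_], _ => rfl
  | _ :: _ :: _, _ => rfl

lemma liftE_getLast? (σ : V → V → ℤ) :
    ∀ (p : List V) (c : ℤ) (t : V), p.getLast? = some t →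
      (liftE σ p c).getLast? = some (t, c + arcCost σ p)
  | [], _, _ => by simp
  | [a], c, t => by
    intro h
    simp_all [liftE, arcCost]
  | a :: b :: l, c, t => by
    intro h
    rw [List.getLast?_cons_cons] at h
    have ih := liftE_getLast? σ (b :: l) (c + σ a b) t h
    show ((a, c) :: liftE σ (b :: l) (c + σ a b)).getLast? = _
    cases hl : liftE σ (b :: l) (c + σ a b) with
    | nil => cases l <;> simp [liftE] at hl
    | cons x xs =>
      rw [hl] at ih
      rw [List.getLast?_cons_cons, ih, arcCost_cons_cons']
      congr 2
      ring

lemma liftE_cost (σ γ : V → V → ℤ) :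
    ∀ (p : List V) (c : ℤ), arcCost (γE γ) (liftE σ p c) = arcCost γ p
  | [], _ => rfl
  | [_], _ => rfl
  | a :: b :: l, c => by
    have ih := liftE_cost σ γ (b :: l) (c + σ a b)
    show arcCost (γE γ) ((a, c) :: liftE σ (b :: l) (c + σ a b)) = _
    cases hl : liftE σ (b :: l) (c + σ a b) with
    | nil => cases l <;> simp [liftE] at hl
    | cons x xs =>
      have hx : x.1 = b := by
        have := liftE_map_fst σ (b :: l) (c + σ a b)
        rw [hl] at this
        simp at this
        exact this.1
      rw [hl] at ih
      rw [arcCost_cons_cons', arcCost_cons_cons', ih]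
      simp [γE, hx]

lemma liftE_chain' {A : V → V → Prop} {σ : V → V → ℤ} {Cmax : ℤ}
    (hσ : ∀ a b, A a b → 0 ≤ σ a b) :
    ∀ (p : List V) (c : ℤ), p.Chain' A → 0 ≤ c →
      (∀ q, q <+: p → c + arcCost σ q ≤ Cmax) →
      (liftE σ p c).Chain' (ArcE A σ Cmax)
  | [], _ => by intros; simp [liftE]
  | [a], c => by intros; simp [liftE]
  | a :: b :: l, c => by
    intro hc h0 hpre
    have hab : A a b := (List.chain'_cons.mp hc).1
    have hc' : (b :: l).Chain' A := (List.chain'_cons.mp hc).2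
    have h0' : 0 ≤ c + σ a b := by have := hσ a b hab; omega
    have hpre' : ∀ q, q <+: (b :: l) → (c + σ a b) + arcCost σ q ≤ Cmax := by
      intro q hq
      cases q with
      | nil =>
        have h2 := hpre [a, b] ⟨l, rfl⟩
        simp [arcCost] at h2 ⊢
        omega
      | cons x q' =>
        have hax : (a :: x :: q') <+: (a :: b :: l) :=
          List.cons_prefix_cons.mpr ⟨rfl, hq⟩
        have h2 := hpre _ hax
        have hxb : x = b := (List.cons_prefix_cons.mp hq).1
        subst hxb
        rw [arcCost_cons_cons'] at h2
        omega
    have ih := liftE_chain' hσ (b :: l) (c + σ a b) hc' h0' hpre'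
    show List.Chain' _ ((a, c) :: liftE σ (b :: l) (c + σ a b))
    rw [List.chain'_cons']
    refine ⟨?_, ih⟩
    intro y hy
    rw [liftE_head?] at hy
    simp at hy
    subst hy
    refine ⟨hab, h0, rfl, ?_⟩
    have h3 := hpre' [] (by simp)
    simpa [arcCost] using h3

end lift

section proj
variable {V : Type*}

lemma arcCost_map_fst (γ : V → V → ℤ) :
    ∀ (pE : List (V × ℤ)), arcCost γ (pE.map Prod.fst) = arcCost (γE γ) pE
  | [] => rfl
  | [_] => rfl
  | x :: y :: l => by
    have ih := arcCost_map_fst γ (y :: l)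
    simp only [List.map_cons] at *
    rw [arcCost_cons_cons', arcCost_cons_cons', ih]
    rfl

lemma level_eq {A : V → V → Prop} {σ : V → V → ℤ} {Cmax : ℤ} :
    ∀ (pE : List (V × ℤ)), pE.Chain' (ArcE A σ Cmax) →
      ∀ a c0 b c, pE.head? = some (a, c0) → pE.getLast? = some (b, c) →
      c = c0 + arcCost σ (pE.map Prod.fst)
  | [] => by simp
  | [x] => by
    intro _ a c0 b c h1 h2
    simp_all [arcCost]
  | x :: y :: l => by
    intro hc a c0 b c h1 h2
    rw [List.chain'_cons] at hc
    have harc := hc.1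
    have ih := level_eq (y :: l) hc.2 y.1 y.2 b c (by simp) (by
      rw [List.getLast?_cons_cons] at h2; exact h2)
    simp only [List.head?_cons, Option.some.injEq] at h1
    have hx : x = (a, c0) := h1
    subst hx
    obtain ⟨_, _, heq, _⟩ := harc
    simp only at heq
    simp only [List.map_cons, arcCost_cons_cons']
    simp only [List.map_cons] at ih
    omega

lemma exists_dup : ∀ (p : List V), ¬ p.Nodup →
    ∃ a q₁ q₂ q₃, p = q₁ ++ a :: (q₂ ++ a :: q₃) := by
  intro p
  induction p with
  | nil => intro h; exact absurd List.nodup_nil h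
  | cons x xs ih =>
    intro h
    rw [List.nodup_cons] at h
    push_neg at h
    by_cases hx : x ∈ xs
    · obtain ⟨q₂, q₃, rfl⟩ := List.append_of_mem hx
      exact ⟨x, [], q₂, q₃, rfl⟩
    · obtain ⟨a, q₁, q₂, q₃, rfl⟩ := ih (h hx)
      exact ⟨a, x :: q₁, q₂, q₃, rfl⟩

lemma walk_to_path {A : V → V → Prop} {γ σ : V → V → ℤ} {s t : V}
    (hcircγ : ∀ p, IsCircuit A p → 0 < arcCost γ p)
    (hcircσ : ∀ p, IsCircuit A p → 0 ≤ arcCost σ p) :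
    ∀ (n : ℕ) (p : List V), p.length ≤ n → IsWalk A s t p →
      ∃ q, IsPath A s t q ∧ arcCost γ q ≤ arcCost γ p ∧ arcCost σ q ≤ arcCost σ p := by
  intro n
  induction n with
  | zero =>
    intro p hp hw
    interval_cases h : p.length
    · exact absurd hw.2.1 (by simp [List.length_eq_zero_iff.mp h])
  | succ n ih =>
    intro p hp hw
    by_cases hnd : p.Nodup
    · exact ⟨p, ⟨hw, hnd⟩, le_refl _, le_refl _⟩
    · obtain ⟨a, q₁, q₂, q₃, rfl⟩ := exists_dup p hnd
      obtain ⟨hc, hh, hl⟩ := hw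
      -- rewrite p as q₁ ++ (a :: q₂) ++ (a :: q₃)
      have hsplit : q₁ ++ a :: (q₂ ++ a :: q₃) = q₁ ++ (a :: q₂) ++ (a :: q₃) := by
        simp
      rw [hsplit] at hc hh hl
      rw [List.chain'_append] at hc
      obtain ⟨hc1, hc2, hglue⟩ := hc
      rw [List.chain'_append] at hc1
      obtain ⟨hcq₁, hcq₂, hglue1⟩ := hc1
      -- the circuit
      have hcirc : IsCircuit A ((a :: q₂) ++ [a]) := by
        refine ⟨?_, by simp, ?_⟩
        · rw [List.chain'_append]
          refine ⟨hcq₂, by simp, ?_⟩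
          intro x hx y hy
          simp only [List.head?_cons, Option.mem_def, Option.some.injEq] at hy
          subst hy
          have hx' : x ∈ (q₁ ++ a :: q₂).getLast? := by
            rw [List.getLast?_append]
            simp only [Option.mem_def] at hx ⊢
            rw [hx]
            rfl
          exact hglue x hx' a (by simp)
        · exact List.getLast?_concat.symm
      -- the shorter walk
      have hwalk' : IsWalk A s t (q₁ ++ (a :: q₃)) := by
        refine ⟨?_, ?_, ?_⟩
        · rw [List.chain'_append]
          refine ⟨hcq₁, hc2, ?_⟩
          intro x hx y hy
          simp only [List.head?_cons, Option.mem_def, Option.some.injEq] at hy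
          subst hy
          exact hglue1 x hx a (by simp)
        · cases q₁ with
          | nil => simpa using hh
          | cons u q₁' => simpa using hh
        · rw [List.getLast?_append] at hl ⊢
          cases h' : (a :: q₃).getLast? with
          | none => exact absurd h' (by simp)
          | some w => rw [h'] at hl; exact hl
      have hlen : (q₁ ++ (a :: q₃)).length ≤ n := by
        simp at hp ⊢
        omega
      obtain ⟨q, hq, hγ, hσ'⟩ := ih (q₁ ++ (a :: q₃)) hlen hwalk'
      -- cost comparison
      have hcost : ∀ (f : V → V → ℤ),
          arcCost f (q₁ ++ a :: (q₂ ++ a :: q₃)) =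
          arcCost f (q₁ ++ (a :: q₃)) + arcCost f ((a :: q₂) ++ [a]) := by
        intro f
        have h2 : arcCost f ((a :: (q₂ ++ a :: q₃)) : List V) =
            arcCost f ((a :: q₂) ++ a :: q₃) :=
          congrArg (arcCost f) (by simp)
        rw [arcCost_append_cons' f q₁ a (q₂ ++ a :: q₃), h2,
            arcCost_append_cons' f (a :: q₂) a q₃,
            arcCost_append_cons' f q₁ a q₃]
        ring
      refine ⟨q, hq, ?_, ?_⟩
      · have := hcircγ _ hcirc
        rw [hcost γ]; omega
      · have := hcircσ _ hcirc
        rw [hcost σ]; omega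

end proj


/-- the minimum primary length over feasible paths from the source `s` to
the sink set `T` in `G` equals the minimum primary length over paths from `(s,0)` to
sink copies in the expanded network `G_E`. -/
theorem constrained_shortest_via_expanded {V : Type*} (A : V → V → Prop)
    (γ σ : V → V → ℤ) (Cmax : ℤ) (T : Set V) (s : V)
    (hσ : ∀ a b, A a b → 0 ≤ σ a b)
    (hcircγ : ∀ p, IsCircuit A p → 0 < arcCost γ p)
    (hcircσ : ∀ p, IsCircuit A p → 0 ≤ arcCost σ p) :
    ∀ m : ℤ,
      IsLeast {L : ℤ | ∃ t ∈ T, ∃ p, FeasiblePath A σ Cmax s t p ∧ arcCost γ p = L} m ↔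
      IsLeast {L : ℤ | ∃ t ∈ T, ∃ c : ℤ, c ≤ Cmax ∧
        ∃ pE, IsPath (ArcE A σ Cmax) (s, 0) (t, c) pE ∧ arcCost (γE γ) pE = L} m := by
  intro m
  set S₁ := {L : ℤ | ∃ t ∈ T, ∃ p, FeasiblePath A σ Cmax s t p ∧ arcCost γ p = L} with hS₁
  set S₂ := {L : ℤ | ∃ t ∈ T, ∃ c : ℤ, c ≤ Cmax ∧
      ∃ pE, IsPath (ArcE A σ Cmax) (s, 0) (t, c) pE ∧ arcCost (γE γ) pE = L} with hS₂
  have key1 : ∀ L ∈ S₁, L ∈ S₂ := by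
    rintro L ⟨t, ht, p, ⟨⟨⟨hch, hh, hl⟩, hnd⟩, hfeas⟩, hcost⟩
    refine ⟨t, ht, arcCost σ p, hfeas p (List.prefix_refl p), liftE σ p 0, ⟨⟨?_, ?_, ?_⟩, ?_⟩, ?_⟩
    · exact liftE_chain' hσ p 0 hch le_rfl (fun q hq => by simpa using hfeas q hq)
    · rw [liftE_head?, hh]; rfl
    · rw [liftE_getLast? σ p 0 t hl, zero_add]
    · exact List.Nodup.of_map Prod.fst (by rw [liftE_map_fst]; exact hnd)
    · rw [liftE_cost]; exact hcost
  have key2 : ∀ L ∈ S₂, ∃ L' ∈ S₁, L' ≤ L := by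
    rintro L ⟨t, ht, c, hcle, pE, ⟨⟨hch, hh, hl⟩, hnd⟩, hcost⟩
    set p := pE.map Prod.fst with hp
    have hchp : p.Chain' A := by
      rw [hp, List.chain'_map]
      exact hch.imp (fun a b hab => hab.1)
    have hhp : p.head? = some s := by
      rw [hp, List.head?_map, hh]; rfl
    have hlp : p.getLast? = some t := by
      rw [hp, List.getLast?_map, hl]; rfl
    have hlev : c = 0 + arcCost σ p := level_eq pE hch s 0 t c hh hl
    obtain ⟨q, hq, hγq, hσq⟩ := walk_to_path hcircγ hcircσ p.length p le_rfl ⟨hchp, hhp, hlp⟩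
    refine ⟨arcCost γ q, ⟨t, ht, q, ⟨hq, ?_⟩, rfl⟩, ?_⟩
    · intro r hr
      have h1 := arcCost_prefix_le hσ q r hq.1.1 hr
      omega
    · rw [← hcost, ← arcCost_map_fst]
      exact hγq
  constructor
  · rintro ⟨hm, hlb⟩
    refine ⟨key1 m hm, fun L hL => ?_⟩
    obtain ⟨L', hL', hle⟩ := key2 L hL
    exact (hlb hL').trans hle
  · rintro ⟨hm, hlb⟩
    obtain ⟨L', hL', hle⟩ := key2 m hm
    have hge : m ≤ L' := hlb (key1 L' hL')
    refine ⟨(le_antisymm hle hge) ▸ hL', fun L hL => hlb (key1 L hL)⟩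
end
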